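/- Let (Ω, Σ, μ) be a measure space without atoms of infinite measure, and let T be a bounded linear operator on L¹(Ω). Suppose that for every ε > 0 and every A ∈ Σ with μ(A) > 0 there exists B ⊆ A with 0 < μ(B) < ∞ such that ‖χ_B · T(χ_B/μ(B))‖_{L¹} < ε. Then for every A ∈ Σ with μ(A) > 0, the restriction T_A of T to L¹(A) satisfies the Daugavet equation: ‖Id_A + T_A‖ = 1 + ‖T_A‖. -/

import Mathlib

open MeasureTheory ENNReal

set_option synthInstance.maxHeartbeats 1000000
set_option maxHeartbeats 1000000

variable {Ω : Type*} [MeasurableSpace Ω]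

/-- The subspace `L¹(A)` of `L¹(μ)`: functions vanishing a.e. off `A`. -/
noncomputable def LoneSub (μ : Measure Ω) (A : Set Ω) : Submodule ℝ (Lp ℝ 1 μ) where
  carrier := {f | ∀ᵐ x ∂μ, x ∉ A → f x = 0}
  zero_mem' := by
    simp only [Set.mem_setOf_eq]
    filter_upwards [Lp.coeFn_zero ℝ 1 μ] with x hx _
    simpa using hx
  add_mem' := by
    intro f g hf hg
    have : ∀ᵐ x ∂μ, x ∉ A → ((f + g : Lp ℝ 1 μ) : Ω → ℝ) x = 0 := by
      filter_upwards [Lp.coeFn_add f g, hf, hg] with x hx h1 h2 hxA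
      rw [hx]
      simp [h1 hxA, h2 hxA]
    exact this
  smul_mem' := by
    intro c f hf
    have : ∀ᵐ x ∂μ, x ∉ A → ((c • f : Lp ℝ 1 μ) : Ω → ℝ) x = 0 := by
      filter_upwards [Lp.coeFn_smul c f, hf] with x hx h1 hxA
      rw [hx]
      simp [h1 hxA]
    exact this

/-- The normalized indicator function `χ_B / μ(B)` as an element of `L¹(μ)`. -/
noncomputable def normInd (μ : Measure Ω) {B : Set Ω} (hB : MeasurableSet B)
    (hBfin : μ B ≠ ∞) : Lp ℝ 1 μ :=
  indicatorConstLp 1 hB hBfin ((μ B).toReal)⁻¹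

namespace DaugavetAux

variable {μ : Measure Ω}



lemma indCongr {s t : Set Ω} (h : s = t) (hs : MeasurableSet s) (hμs : μ s ≠ ∞)
    (ht : MeasurableSet t) (hμt : μ t ≠ ∞) (c : ℝ) :
    indicatorConstLp 1 hs hμs c = indicatorConstLp 1 ht hμt c := by
  subst h; rfl

lemma indSmul {s : Set Ω} (hs : MeasurableSet s) (hμs : μ s ≠ ∞) (c : ℝ) :
    indicatorConstLp 1 hs hμs c = c • indicatorConstLp 1 hs hμs (1 : ℝ) := by
  ext1
  filter_upwards [indicatorConstLp_coeFn (p := 1) (hs := hs) (hμs := hμs) (c := c),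
    Lp.coeFn_smul c (indicatorConstLp 1 hs hμs (1 : ℝ)),
    indicatorConstLp_coeFn (p := 1) (hs := hs) (hμs := hμs) (c := (1 : ℝ))] with x h1 h2 h3
  rw [h1, h2, Pi.smul_apply, h3]
  by_cases hx : x ∈ s <;> simp [Set.indicator_apply, hx]

lemma norm_ind {s : Set Ω} (hs : MeasurableSet s) (hμs : μ s ≠ ∞) (c : ℝ) :
    ‖indicatorConstLp 1 hs hμs c‖ = |c| * (μ s).toReal := by
  rw [norm_indicatorConstLp one_ne_zero one_ne_top]
  simp [Real.norm_eq_abs, measureReal_def]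

lemma ind_null {s : Set Ω} (hs : MeasurableSet s) (hμs : μ s ≠ ∞) (c : ℝ) (h0 : μ s = 0) :
    indicatorConstLp 1 hs hμs c = 0 := by
  rw [← norm_eq_zero, norm_ind, h0]
  simp




/-- multiplication by the indicator of `A`, as a linear map on `L¹`. -/
noncomputable def maskLM {A : Set Ω} (hA : MeasurableSet A) : Lp ℝ 1 μ →ₗ[ℝ] Lp ℝ 1 μ where
  toFun f := ((Lp.memLp f).indicator hA).toLp (A.indicator f)
  map_add' f g := by
    ext1
    filter_upwards [MemLp.coeFn_toLp (E := ℝ) (((Lp.memLp (f + g)).indicator hA)),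
      Lp.coeFn_add ((((Lp.memLp f).indicator hA)).toLp (A.indicator f))
        ((((Lp.memLp g).indicator hA)).toLp (A.indicator g)),
      MemLp.coeFn_toLp (E := ℝ) (((Lp.memLp f).indicator hA)),
      MemLp.coeFn_toLp (E := ℝ) (((Lp.memLp g).indicator hA)),
      Lp.coeFn_add f g] with x h1 h2 h3 h4 h5
    rw [h1, h2, Pi.add_apply, h3, h4]
    by_cases hx : x ∈ A
    · rw [Set.indicator_of_mem hx, Set.indicator_of_mem hx, Set.indicator_of_mem hx]
      exact h5
    · rw [Set.indicator_of_notMem hx, Set.indicator_of_notMem hx,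
        Set.indicator_of_notMem hx]
      simp
  map_smul' c f := by
    ext1
    filter_upwards [MemLp.coeFn_toLp (E := ℝ) (((Lp.memLp (c • f)).indicator hA)),
      Lp.coeFn_smul c ((((Lp.memLp f).indicator hA)).toLp (A.indicator f)),
      MemLp.coeFn_toLp (E := ℝ) (((Lp.memLp f).indicator hA)),
      Lp.coeFn_smul c f] with x h1 h2 h3 h4
    rw [RingHom.id_apply, h1, h2, Pi.smul_apply, h3]
    by_cases hx : x ∈ A
    · rw [Set.indicator_of_mem hx, Set.indicator_of_mem hx]
      exact h4
    · rw [Set.indicator_of_notMem hx, Set.indicator_of_notMem hx]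
      simp

lemma maskLM_norm_le {A : Set Ω} (hA : MeasurableSet A) (f : Lp ℝ 1 μ) :
    ‖maskLM hA f‖ ≤ ‖f‖ := by
  rw [maskLM]
  simp only [LinearMap.coe_mk, AddHom.coe_mk]
  rw [Lp.norm_toLp, Lp.norm_def]
  exact ENNReal.toReal_mono (Lp.eLpNorm_ne_top f) (eLpNorm_indicator_le _)

/-- multiplication by the indicator of `A`, as a continuous linear map on `L¹`. -/
noncomputable def maskCLM {A : Set Ω} (hA : MeasurableSet A) : Lp ℝ 1 μ →L[ℝ] Lp ℝ 1 μ :=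
  LinearMap.mkContinuous (maskLM hA) 1 (fun f => by simpa using maskLM_norm_le hA f)

lemma maskCLM_coeFn {A : Set Ω} (hA : MeasurableSet A) (f : Lp ℝ 1 μ) :
    ⇑(maskCLM hA f) =ᵐ[μ] A.indicator f :=
  MemLp.coeFn_toLp (E := ℝ) ((Lp.memLp f).indicator hA)

lemma maskCLM_eq_self {A : Set Ω} (hA : MeasurableSet A) (f : Lp ℝ 1 μ)
    (hf : ∀ᵐ x ∂μ, x ∉ A → f x = 0) : maskCLM hA f = f := by
  ext1
  filter_upwards [maskCLM_coeFn hA f, hf] with x h1 h2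
  rw [h1]
  by_cases hx : x ∈ A
  · exact Set.indicator_of_mem hx _
  · rw [Set.indicator_of_notMem hx, h2 hx]

lemma maskCLM_ind {A s : Set Ω} (hA : MeasurableSet A) (hs : MeasurableSet s)
    (hμs : μ s ≠ ∞) (c : ℝ) :
    maskCLM hA (indicatorConstLp 1 hs hμs c) =
      indicatorConstLp 1 (hA.inter hs)
        (ne_top_of_le_ne_top hμs (measure_mono Set.inter_subset_right)) c := by
  ext1
  filter_upwards [maskCLM_coeFn hA (indicatorConstLp 1 hs hμs c),
    indicatorConstLp_coeFn (p := 1) (hs := hA.inter hs)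
      (hμs := ne_top_of_le_ne_top hμs (measure_mono Set.inter_subset_right)) (c := c),
    (indicatorConstLp_coeFn (p := 1) (hs := hs) (hμs := hμs) (c := c)).indicator (s := A)]
    with x h1 h2 h3
  rw [h1, h3, h2]
  by_cases hx : x ∈ A <;> by_cases hx' : x ∈ s <;>
    simp [Set.indicator_apply, hx, hx']




lemma integrable_w_mul {w : Ω → ℝ} (hw : Measurable w) (hbd : ∀ x, |w x| ≤ 1)
    (v : Lp ℝ 1 μ) : Integrable (fun x => w x * (v : Ω → ℝ) x) μ :=
  (L1.integrable_coeFn v).bdd_mul (c := 1) hw.aestronglyMeasurable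
    (ae_of_all _ fun x => by simpa [Real.norm_eq_abs] using hbd x)

lemma abs_integral_w_mul_le {w : Ω → ℝ} (hw : Measurable w) (hbd : ∀ x, |w x| ≤ 1)
    (v : Lp ℝ 1 μ) : |∫ x, w x * (v : Ω → ℝ) x ∂μ| ≤ ‖v‖ := by
  rw [L1.norm_eq_integral_norm]
  rw [← Real.norm_eq_abs]
  refine le_trans (norm_integral_le_integral_norm _) ?_
  refine integral_mono (integrable_w_mul hw hbd v).norm (L1.integrable_coeFn v).norm ?_
  intro x
  simp only [Real.norm_eq_abs, abs_mul]
  calc |w x| * |(v : Ω → ℝ) x| ≤ 1 * |(v : Ω → ℝ) x| := by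
        apply mul_le_mul_of_nonneg_right (hbd x) (abs_nonneg _)
    _ = _ := one_mul _

/-- The pairing `g ↦ ∫ w ⬝ (T g)` as a continuous linear functional on `L¹`. -/
noncomputable def pairingCLM (T : Lp ℝ 1 μ →L[ℝ] Lp ℝ 1 μ) {w : Ω → ℝ}
    (hw : Measurable w) (hbd : ∀ x, |w x| ≤ 1) : Lp ℝ 1 μ →L[ℝ] ℝ :=
  LinearMap.mkContinuous
    { toFun := fun g => ∫ x, w x * (T g : Ω → ℝ) x ∂μ
      map_add' := fun g₁ g₂ => by
        rw [← integral_add (integrable_w_mul hw hbd (T g₁)) (integrable_w_mul hw hbd (T g₂))]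
        apply integral_congr_ae
        rw [map_add]
        filter_upwards [Lp.coeFn_add (T g₁) (T g₂)] with x hx
        rw [hx, Pi.add_apply]
        ring
      map_smul' := fun c g => by
        rw [RingHom.id_apply, ← integral_smul]
        apply integral_congr_ae
        rw [T.map_smul]
        filter_upwards [Lp.coeFn_smul c (T g)] with x hx
        rw [hx, Pi.smul_apply]
        simp [mul_comm, mul_left_comm] }
    ‖T‖ (fun g => by
      simp only [LinearMap.coe_mk, AddHom.coe_mk, Real.norm_eq_abs]
      exact le_trans (abs_integral_w_mul_le hw hbd (T g)) (T.le_opNorm g))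

lemma pairingCLM_apply (T : Lp ℝ 1 μ →L[ℝ] Lp ℝ 1 μ) {w : Ω → ℝ}
    (hw : Measurable w) (hbd : ∀ x, |w x| ≤ 1) (g : Lp ℝ 1 μ) :
    pairingCLM T hw hbd g = ∫ x, w x * (T g : Ω → ℝ) x ∂μ := rfl

lemma abs_pairingCLM_le (T : Lp ℝ 1 μ →L[ℝ] Lp ℝ 1 μ) {w : Ω → ℝ}
    (hw : Measurable w) (hbd : ∀ x, |w x| ≤ 1) (g : Lp ℝ 1 μ) :
    |pairingCLM T hw hbd g| ≤ ‖T g‖ :=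
  abs_integral_w_mul_le hw hbd (T g)






lemma norm_ind' {s : Set Ω} (hs : MeasurableSet s) (hμs : μ s ≠ ∞) (c : ℝ) :
    ‖indicatorConstLp 1 hs hμs c‖ = |c| * (μ s).toReal := by
  rw [norm_indicatorConstLp one_ne_zero one_ne_top]
  simp [Real.norm_eq_abs, measureReal_def]

lemma biUnion_fin (E : ℕ → Set Ω) (hfn : ∀ n, μ (E n) ≠ ∞) (s : Finset ℕ) :
    μ (⋃ n ∈ s, E n) ≠ ∞ :=
  ((measure_biUnion_finset_le s E).trans_lt
    (ENNReal.sum_lt_top.mpr fun n _ => (hfn n).lt_top)).ne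

lemma sum_ind (E : ℕ → Set Ω) (hE : ∀ n, MeasurableSet (E n)) (hfn : ∀ n, μ (E n) ≠ ∞)
    (hd : Pairwise (Function.onFun Disjoint E)) (s : Finset ℕ) :
    ∑ n ∈ s, (indicatorConstLp 1 (hE n) (hfn n) (1 : ℝ)) =
      indicatorConstLp 1 (s.measurableSet_biUnion (fun n _ => hE n))
        (biUnion_fin E hfn s) 1 := by
  classical
  induction s using Finset.induction_on with
  | empty =>
    rw [Finset.sum_empty,
      indCongr (show (⋃ n ∈ (∅ : Finset ℕ), E n) = (∅ : Set Ω) by simp) _ _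
        MeasurableSet.empty (by simp), indicatorConstLp_empty]
  | insert a s ha ih =>
    have hdisj : Disjoint (E a) (⋃ n ∈ s, E n) := by
      refine Set.disjoint_iUnion₂_right.mpr fun n hn => hd (fun h => ha (h ▸ hn))
    rw [Finset.sum_insert ha, ih,
      ← indicatorConstLp_disjoint_union (hE a) (s.measurableSet_biUnion (fun n _ => hE n))
        (hfn a) (biUnion_fin E hfn s) hdisj (1 : ℝ),
      indCongr (show E a ∪ ⋃ n ∈ s, E n = ⋃ n ∈ insert a s, E n by
        simp [Set.biUnion_insert]) _ _
        ((insert a s).measurableSet_biUnion (fun n _ => hE n))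
        (biUnion_fin E hfn (insert a s))]

lemma hasSum_ind (E : ℕ → Set Ω) (hE : ∀ n, MeasurableSet (E n)) (hfn : ∀ n, μ (E n) ≠ ∞)
    (hd : Pairwise (Function.onFun Disjoint E)) (hUfin : μ (⋃ n, E n) ≠ ∞) :
    HasSum (fun n => indicatorConstLp 1 (hE n) (hfn n) (1 : ℝ))
      (indicatorConstLp 1 (MeasurableSet.iUnion hE) hUfin 1) := by
  have hnorm : ∀ n, ‖indicatorConstLp 1 (hE n) (hfn n) (1 : ℝ)‖ = (μ (E n)).toReal := by
    intro n; rw [norm_ind']; simp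
  have hsummable : Summable (fun n => indicatorConstLp 1 (hE n) (hfn n) (1 : ℝ)) := by
    apply Summable.of_norm
    simp only [hnorm]
    exact ENNReal.summable_toReal (by rwa [← measure_iUnion hd hE])
  obtain ⟨a, ha⟩ := hsummable
  have h1 : Filter.Tendsto (fun N => ∑ n ∈ Finset.range N,
      indicatorConstLp 1 (hE n) (hfn n) (1 : ℝ)) Filter.atTop (nhds a) :=
    ha.tendsto_sum_nat
  -- the tail sets
  set D : ℕ → Set Ω := fun N => ⋃ (n) (_ : N ≤ n), E n with hD
  have hDmeas : ∀ N, MeasurableSet (D N) := fun N =>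
    MeasurableSet.iUnion fun n => MeasurableSet.iUnion fun _ => hE n
  have hDsub : ∀ N, D N ⊆ ⋃ n, E n := fun N =>
    Set.iUnion₂_subset fun n _ => Set.subset_iUnion E n
  have hDfin : ∀ N, μ (D N) ≠ ∞ := fun N => ne_top_of_le_ne_top hUfin (measure_mono (hDsub N))
  have hDanti : Antitone D := by
    intro N M hNM x hx
    simp only [hD, Set.mem_iUnion] at hx ⊢
    obtain ⟨n, hn, hx⟩ := hx
    exact ⟨n, hNM.trans hn, hx⟩
  have hDinter : ⋂ N, D N = ∅ := by
    ext x
    simp only [Set.mem_iInter, Set.mem_empty_iff_false, iff_false]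
    intro h
    have h0 := h 0
    simp only [hD, Set.mem_iUnion] at h0
    obtain ⟨n₀, -, hx₀⟩ := h0
    have h1' := h (n₀ + 1)
    simp only [hD, Set.mem_iUnion] at h1'
    obtain ⟨n₁, hn₁, hx₁⟩ := h1'
    exact Set.disjoint_left.mp (hd (show n₀ ≠ n₁ by omega)) hx₀ hx₁
  have hsplit : ∀ N, (⋃ n ∈ Finset.range N, E n) ∪ D N = ⋃ n, E n := by
    intro N
    apply Set.Subset.antisymm
    · exact Set.union_subset (Set.iUnion₂_subset fun n _ => Set.subset_iUnion E n) (hDsub N)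
    · intro x hx
      obtain ⟨n, hn⟩ := Set.mem_iUnion.mp hx
      by_cases hlt : n < N
      · exact Set.mem_union_left _ (Set.mem_biUnion (Finset.mem_range.mpr hlt) hn)
      · exact Set.mem_union_right _ (Set.mem_biUnion (not_lt.mp hlt) hn)
  have hdisjN : ∀ N, Disjoint (⋃ n ∈ Finset.range N, E n) (D N) := by
    intro N
    rw [Set.disjoint_left]
    intro x hx hx'
    obtain ⟨n, hn, hxn⟩ := Set.mem_iUnion₂.mp hx
    obtain ⟨m, hm, hxm⟩ := Set.mem_iUnion₂.mp hx'
    exact Set.disjoint_left.mp (hd (show n ≠ m by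
      have := Finset.mem_range.mp hn; omega)) hxn hxm
  have key : ∀ N, indicatorConstLp 1 (MeasurableSet.iUnion hE) hUfin 1 -
      (∑ n ∈ Finset.range N, indicatorConstLp 1 (hE n) (hfn n) (1 : ℝ)) =
      indicatorConstLp 1 (hDmeas N) (hDfin N) 1 := by
    intro N
    rw [sum_ind E hE hfn hd, indCongr (hsplit N).symm _ _
      (((Finset.range N).measurableSet_biUnion (fun n _ => hE n)).union (hDmeas N))
      (by rw [hsplit]; exact hUfin),
      indicatorConstLp_disjoint_union ((Finset.range N).measurableSet_biUnion (fun n _ => hE n))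
        (hDmeas N) (biUnion_fin E hfn (Finset.range N)) (hDfin N)
        (hdisjN N) 1]
    abel
  have h2 : Filter.Tendsto (fun N => ∑ n ∈ Finset.range N,
      indicatorConstLp 1 (hE n) (hfn n) (1 : ℝ)) Filter.atTop
      (nhds (indicatorConstLp 1 (MeasurableSet.iUnion hE) hUfin 1)) := by
    rw [tendsto_iff_norm_sub_tendsto_zero]
    have : (fun N => ‖(∑ n ∈ Finset.range N, indicatorConstLp 1 (hE n) (hfn n) (1 : ℝ)) -
        indicatorConstLp 1 (MeasurableSet.iUnion hE) hUfin 1‖) =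
        fun N => (μ (D N)).toReal := by
      funext N
      rw [norm_sub_rev, key N, norm_ind']
      simp
    rw [this]
    have htend : Filter.Tendsto (fun N => μ (D N)) Filter.atTop (nhds 0) := by
      have := tendsto_measure_iInter_atTop (μ := μ)
        (fun N => (hDmeas N).nullMeasurableSet) hDanti ⟨0, hDfin 0⟩
      rwa [hDinter, measure_empty] at this
    have := (ENNReal.tendsto_toReal (by simp : (0 : ℝ≥0∞) ≠ ∞)).comp htend
    simpa [Function.comp_def] using this
  rwa [tendsto_nhds_unique h1 h2] at ha


lemma inter_fin {B₀ : Set Ω} (hfin : μ B₀ ≠ ∞) (E : Set Ω) : μ (E ∩ B₀) ≠ ∞ :=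
  ne_top_of_le_ne_top hfin (measure_mono Set.inter_subset_right)

open scoped Classical in
/-- The underlying set function of `nu`. -/
noncomputable def nuFun (φ : Lp ℝ 1 μ →L[ℝ] ℝ) {B₀ : Set Ω} (hB₀ : MeasurableSet B₀)
    (hfin : μ B₀ ≠ ∞) (E : Set Ω) : ℝ :=
  if h : MeasurableSet E then
    φ (indicatorConstLp 1 (h.inter hB₀) (inter_fin hfin E) 1) else 0

lemma nuFun_pos (φ : Lp ℝ 1 μ →L[ℝ] ℝ) {B₀ : Set Ω} (hB₀ : MeasurableSet B₀)
    (hfin : μ B₀ ≠ ∞) {E : Set Ω} (hE : MeasurableSet E) :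
    nuFun φ hB₀ hfin E = φ (indicatorConstLp 1 (hE.inter hB₀) (inter_fin hfin E) 1) := by
  rw [nuFun, dif_pos hE]

/-- The set function `E ↦ φ (χ_{E ∩ B₀})` as a signed measure. -/
noncomputable def nu (φ : Lp ℝ 1 μ →L[ℝ] ℝ) {B₀ : Set Ω} (hB₀ : MeasurableSet B₀)
    (hfin : μ B₀ ≠ ∞) : MeasureTheory.SignedMeasure Ω where
  measureOf' := nuFun φ hB₀ hfin
  empty' := by
    rw [nuFun_pos φ hB₀ hfin MeasurableSet.empty,
      indCongr (show (∅ : Set Ω) ∩ B₀ = (∅ : Set Ω) by simp) _ _ MeasurableSet.empty (by simp),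
      indicatorConstLp_empty, map_zero]
  not_measurable' E hE := by rw [nuFun, dif_neg hE]
  m_iUnion' f hmeas hdis := by
    have key := (hasSum_ind (fun n => f n ∩ B₀) (fun n => (hmeas n).inter hB₀)
      (fun n => inter_fin hfin (f n))
      (hdis.mono fun i j hij => hij.mono Set.inter_subset_left Set.inter_subset_left)
      (ne_top_of_le_ne_top hfin (measure_mono
        (Set.iUnion_subset fun n => Set.inter_subset_right)))).mapL φ
    have heq : (fun i => nuFun φ hB₀ hfin (f i)) =
        fun i => φ (indicatorConstLp 1 ((hmeas i).inter hB₀) (inter_fin hfin (f i)) 1) :=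
      funext fun i => nuFun_pos φ hB₀ hfin (hmeas i)
    rw [heq, nuFun_pos φ hB₀ hfin (MeasurableSet.iUnion hmeas)]
    convert key using 2
    exact indCongr (Set.iUnion_inter B₀ f) _ _ _ _ 1
  
lemma nu_apply (φ : Lp ℝ 1 μ →L[ℝ] ℝ) {B₀ : Set Ω} (hB₀ : MeasurableSet B₀)
    (hfin : μ B₀ ≠ ∞) {E : Set Ω} (hE : MeasurableSet E) :
    nu φ hB₀ hfin E = φ (indicatorConstLp 1 (hE.inter hB₀) (inter_fin hfin E) 1) :=
  nuFun_pos φ hB₀ hfin hE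

/-- Localization: if `φ(normInd B₀) > c` then there is `B₁ ⊆ B₀` of positive measure
all of whose positive-measure subsets `B'` satisfy `φ(normInd B') ≥ c`. -/
lemma exists_positive_part (φ : Lp ℝ 1 μ →L[ℝ] ℝ) {B₀ : Set Ω} (hB₀ : MeasurableSet B₀)
    (h0 : μ B₀ ≠ 0) (hfin : μ B₀ ≠ ∞) {c : ℝ}
    (hgt : c < φ (normInd μ hB₀ hfin)) :
    ∃ B₁, B₁ ⊆ B₀ ∧ MeasurableSet B₁ ∧ 0 < μ B₁ ∧
      ∀ B', B' ⊆ B₁ → ∀ (hB' : MeasurableSet B') (hfin' : μ B' ≠ ∞), μ B' ≠ 0 →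
        c ≤ φ (normInd μ hB' hfin') := by
  haveI : MeasureTheory.IsFiniteMeasure (μ.restrict B₀) :=
    ⟨by rw [Measure.restrict_apply_univ]; exact hfin.lt_top⟩
  set ν := nu φ hB₀ hfin with hν
  set ρ := ν - c • (μ.restrict B₀).toSignedMeasure with hρ
  have hρ_apply : ∀ {E : Set Ω} (hE : MeasurableSet E),
      ρ E = φ (indicatorConstLp 1 (hE.inter hB₀) (inter_fin hfin E) 1)
        - c * (μ (E ∩ B₀)).toReal := by
    intro E hE
    rw [hρ, VectorMeasure.sub_apply, VectorMeasure.smul_apply,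
      Measure.toSignedMeasure_apply_measurable hE, measureReal_def, Measure.restrict_apply hE,
      nu_apply φ hB₀ hfin hE]
    simp [smul_eq_mul]
  -- the "ind1 vs normInd" conversion
  have hφ_ind : ∀ {E : Set Ω} (hE : MeasurableSet E) (hEfin : μ E ≠ ∞),
      φ (indicatorConstLp 1 hE hEfin 1) = (μ E).toReal * φ (normInd μ hE hEfin) := by
    intro E hE hEfin
    by_cases hE0 : μ E = 0
    · rw [ind_null hE hEfin 1 hE0, map_zero, hE0]
      simp
    · have htR : (μ E).toReal ≠ 0 := ENNReal.toReal_ne_zero.mpr ⟨hE0, hEfin⟩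
      rw [normInd, indSmul hE hEfin ((μ E).toReal)⁻¹, φ.map_smul, smul_eq_mul, ← mul_assoc,
        mul_inv_cancel₀ htR, one_mul]
  obtain ⟨i, j, hi, hipos, hj, hjneg, hcompl⟩ := ρ.exists_isCompl_positive_negative
  have hsubpos : ∀ {k : Set Ω}, MeasurableSet k → k ⊆ i → 0 ≤ ρ k := by
    intro k hk hki
    have := (VectorMeasure.restrict_le_restrict_iff 0 ρ hi).mp hipos hk hki
    simpa using this
  have hsubneg : ∀ {k : Set Ω}, MeasurableSet k → k ⊆ j → ρ k ≤ 0 := by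
    intro k hk hkj
    have := (VectorMeasure.restrict_le_restrict_iff ρ 0 hj).mp hjneg hk hkj
    simpa using this
  refine ⟨i ∩ B₀, Set.inter_subset_right, hi.inter hB₀, ?_, ?_⟩
  · -- positive measure
    by_contra hzero
    push_neg at hzero
    have hz : μ (i ∩ B₀) = 0 := le_antisymm hzero zero_le
    have hB₀split : (B₀ ∩ i) ∪ (B₀ ∩ iᶜ) = B₀ := Set.inter_union_compl B₀ i
    have hρB₀ : ρ B₀ = ρ (B₀ ∩ i) + ρ (B₀ ∩ iᶜ) := by
      conv_lhs => rw [← hB₀split]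
      exact VectorMeasure.of_union
        (Disjoint.mono Set.inter_subset_right Set.inter_subset_right disjoint_compl_right)
        (hB₀.inter hi) (hB₀.inter hi.compl)
    have h1 : ρ (B₀ ∩ i) = 0 := by
      rw [hρ_apply (hB₀.inter hi)]
      have : μ ((B₀ ∩ i) ∩ B₀) = 0 := by
        refine le_antisymm ?_ zero_le
        rw [← hz]
        exact measure_mono (by intro x hx; exact ⟨hx.1.2, hx.1.1⟩)
      rw [ind_null _ _ _ this, map_zero, this]
      simp
    have h2 : ρ (B₀ ∩ iᶜ) ≤ 0 := by
      refine hsubneg (hB₀.inter hi.compl) ?_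
      rw [← hcompl.compl_eq]
      exact Set.inter_subset_right
    have h3 : 0 < ρ B₀ := by
      have hB₀B₀ : ρ B₀ = φ (indicatorConstLp 1 hB₀ hfin 1) - c * (μ B₀).toReal := by
        rw [hρ_apply hB₀, indCongr (Set.inter_self B₀) _ _ hB₀ hfin, Set.inter_self B₀]
      rw [hB₀B₀, hφ_ind hB₀ hfin]
      have htR : 0 < (μ B₀).toReal := ENNReal.toReal_pos h0 hfin
      have : c * (μ B₀).toReal < (μ B₀).toReal * φ (normInd μ hB₀ hfin) := by
        rw [mul_comm c]
        exact (mul_lt_mul_iff_right₀ htR).mpr hgt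
      linarith
    rw [hρB₀, h1, zero_add] at h3
    linarith
  · -- all positive measure subsets are good
    intro B' hB'sub hB' hfin' hne0
    have hρB' : 0 ≤ ρ B' := hsubpos hB' (hB'sub.trans Set.inter_subset_left)
    rw [hρ_apply hB'] at hρB'
    have hBB₀ : B' ∩ B₀ = B' := Set.inter_eq_left.mpr
      (hB'sub.trans (Set.inter_subset_right))
    have hfinB' : μ (B' ∩ B₀) ≠ ∞ := inter_fin hfin B'
    rw [indCongr hBB₀ _ _ hB' hfin', hφ_ind hB' hfin', hBB₀] at hρB'
    have htR : 0 < (μ B').toReal := ENNReal.toReal_pos hne0 hfin'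
    nlinarith [htR]





lemma norm_normInd {B : Set Ω} (hB : MeasurableSet B) (hBfin : μ B ≠ ∞) (h0 : μ B ≠ 0) :
    ‖normInd μ hB hBfin‖ = 1 := by
  rw [normInd, norm_ind', abs_of_nonneg (inv_nonneg.mpr ENNReal.toReal_nonneg),
    inv_mul_cancel₀ (ENNReal.toReal_ne_zero.mpr ⟨h0, hBfin⟩)]

/-- disjointly supported `L¹` functions have additive norms. -/
lemma norm_add_eq_of_disjoint {f g : Ω → ℝ} (hf : MemLp f 1 μ) (hg : MemLp g 1 μ)
    (hsupp : Disjoint (Function.support f) (Function.support g)) :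
    ‖hf.toLp f + hg.toLp g‖ = ‖hf.toLp f‖ + ‖hg.toLp g‖ := by
  have hif : Integrable f μ := memLp_one_iff_integrable.mp hf
  have hig : Integrable g μ := memLp_one_iff_integrable.mp hg
  have h1 : ∀ᵐ x ∂μ, ‖(hf.toLp f + hg.toLp g : Lp ℝ 1 μ) x‖ = ‖f x‖ + ‖g x‖ := by
    filter_upwards [Lp.coeFn_add (hf.toLp f) (hg.toLp g), hf.coeFn_toLp, hg.coeFn_toLp]
      with x ha hb hc
    rw [ha, Pi.add_apply, hb, hc]
    by_cases hfx : f x = 0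
    · simp [hfx]
    · have hgx : g x = 0 := by
        by_contra hgx
        exact (Set.disjoint_left.mp hsupp (Function.mem_support.mpr hfx))
          (Function.mem_support.mpr hgx)
      simp [hgx]
  calc ‖hf.toLp f + hg.toLp g‖ = ∫ x, ‖(hf.toLp f + hg.toLp g : Lp ℝ 1 μ) x‖ ∂μ :=
        L1.norm_eq_integral_norm _
    _ = ∫ x, (‖f x‖ + ‖g x‖) ∂μ := integral_congr_ae h1
    _ = (∫ x, ‖f x‖ ∂μ) + ∫ x, ‖g x‖ ∂μ := integral_add hif.norm hig.norm
    _ = ‖hf.toLp f‖ + ‖hg.toLp g‖ := by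
        rw [L1.norm_eq_integral_norm, L1.norm_eq_integral_norm]
        congr 1
        · exact integral_congr_ae (hf.coeFn_toLp.mono fun x hx => by rw [hx]) |>.symm
        · exact integral_congr_ae (hg.coeFn_toLp.mono fun x hx => by rw [hx]) |>.symm

/-- the key lower bound for `‖n + u‖` when `n` is supported on `B'`. -/
lemma norm_add_ge_of_supp (n u : Lp ℝ 1 μ) {B' : Set Ω} (hB' : MeasurableSet B')
    (hn0 : ∀ᵐ x ∂μ, x ∉ B' → (n : Ω → ℝ) x = 0) :
    ‖n‖ + ‖u‖ - 2 * ∫ x in B', ‖(u : Ω → ℝ) x‖ ∂μ ≤ ‖n + u‖ := by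
  have hnu_int : Integrable (⇑(n + u)) μ := L1.integrable_coeFn _
  have hn_int : Integrable (⇑n) μ := L1.integrable_coeFn _
  have hu_int : Integrable (⇑u) μ := L1.integrable_coeFn _
  have h1 : ‖n + u‖ = (∫ x in B', ‖(n + u : Lp ℝ 1 μ) x‖ ∂μ)
      + ∫ x in B'ᶜ, ‖(n + u : Lp ℝ 1 μ) x‖ ∂μ := by
    rw [L1.norm_eq_integral_norm, ← integral_add_compl hB' hnu_int.norm]
  have h2 : ∫ x in B'ᶜ, ‖(n + u : Lp ℝ 1 μ) x‖ ∂μ = ∫ x in B'ᶜ, ‖(u : Ω → ℝ) x‖ ∂μ := by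
    refine setIntegral_congr_ae hB'.compl ?_
    filter_upwards [hn0, Lp.coeFn_add n u] with x hx hadd hmem
    rw [hadd, Pi.add_apply, hx hmem, zero_add]
  have h3 : ∫ x in B'ᶜ, ‖(u : Ω → ℝ) x‖ ∂μ = ‖u‖ - ∫ x in B', ‖(u : Ω → ℝ) x‖ ∂μ := by
    have := integral_add_compl hB' hu_int.norm
    rw [L1.norm_eq_integral_norm]
    linarith
  have h4 : ∫ x in B', ‖(n : Ω → ℝ) x‖ ∂μ = ‖n‖ := by
    have hc : ∫ x in B'ᶜ, ‖(n : Ω → ℝ) x‖ ∂μ = 0 := by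
      rw [show (0 : ℝ) = ∫ _ in B'ᶜ, (0 : ℝ) ∂μ by rw [integral_zero]]
      refine setIntegral_congr_ae hB'.compl ?_
      filter_upwards [hn0] with x hx hmem
      rw [hx hmem, norm_zero]
    have := integral_add_compl hB' hn_int.norm
    rw [L1.norm_eq_integral_norm]
    linarith
  have h5 : ∫ x in B', (‖(n : Ω → ℝ) x‖ - ‖(u : Ω → ℝ) x‖) ∂μ
      ≤ ∫ x in B', ‖(n + u : Lp ℝ 1 μ) x‖ ∂μ := by
    refine integral_mono_ae ((hn_int.norm.sub hu_int.norm).restrict)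
      (hnu_int.norm.restrict) ?_
    refine ae_restrict_of_ae ?_
    filter_upwards [Lp.coeFn_add n u] with x hx
    rw [hx, Pi.add_apply]
    have : ‖(n : Ω → ℝ) x‖ ≤ ‖(n : Ω → ℝ) x + (u : Ω → ℝ) x‖ + ‖(u : Ω → ℝ) x‖ := by
      simpa using norm_add_le ((n : Ω → ℝ) x + (u : Ω → ℝ) x) (-(u : Ω → ℝ) x)
    linarith
  have h6 : ∫ x in B', (‖(n : Ω → ℝ) x‖ - ‖(u : Ω → ℝ) x‖) ∂μ
      = ‖n‖ - ∫ x in B', ‖(u : Ω → ℝ) x‖ ∂μ := by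
    rw [integral_sub (hn_int.norm.restrict) (hu_int.norm.restrict), h4]
  linarith


lemma phi_ind_eq (φ : Lp ℝ 1 μ →L[ℝ] ℝ) {E : Set Ω} (hE : MeasurableSet E) (hEfin : μ E ≠ ∞) :
    φ (indicatorConstLp 1 hE hEfin 1) = (μ E).toReal * φ (normInd μ hE hEfin) := by
  by_cases hE0 : μ E = 0
  · rw [ind_null hE hEfin 1 hE0, map_zero, hE0]
    simp
  · have htR : (μ E).toReal ≠ 0 := ENNReal.toReal_ne_zero.mpr ⟨hE0, hEfin⟩
    rw [normInd, indSmul hE hEfin ((μ E).toReal)⁻¹, φ.map_smul, smul_eq_mul, ← mul_assoc,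
      mul_inv_cancel₀ htR, one_mul]

/-- If `φ` is bounded by `c₀` on all normalized indicators of subsets of `A`, then
`φ ∘ mask_A` is bounded by `c₀` in operator norm. -/
lemma bound_of_ind_bound (φ : Lp ℝ 1 μ →L[ℝ] ℝ) {A : Set Ω} (hA : MeasurableSet A)
    {c₀ : ℝ} (hc₀ : 0 ≤ c₀)
    (hall : ∀ B, B ⊆ A → ∀ (hm : MeasurableSet B) (hf : μ B ≠ ∞), μ B ≠ 0 →
      |φ (normInd μ hm hf)| ≤ c₀) :
    ∀ u : Lp ℝ 1 μ, |φ (maskCLM hA u)| ≤ c₀ * ‖u‖ := by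
  refine Lp.induction one_ne_top (fun u : Lp ℝ 1 μ => |φ (maskCLM hA u)| ≤ c₀ * ‖u‖) ?_ ?_ ?_
  · intro c s hs hμs
    rw [Lp.simpleFunc.coe_indicatorConst, maskCLM_ind hA hs hμs.ne c, norm_ind']
    have hint : μ (A ∩ s) ≠ ∞ :=
      ne_top_of_le_ne_top hμs.ne (measure_mono Set.inter_subset_right)
    by_cases h0 : μ (A ∩ s) = 0
    · rw [ind_null _ _ _ h0, map_zero, abs_zero]
      positivity
    · rw [indSmul (hA.inter hs) _ c, φ.map_smul, smul_eq_mul, abs_mul,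
        phi_ind_eq φ (hA.inter hs) hint, abs_mul]
      have h1 : |φ (normInd μ (hA.inter hs) hint)| ≤ c₀ :=
        hall (A ∩ s) Set.inter_subset_left (hA.inter hs) hint h0
      have h2 : (μ (A ∩ s)).toReal ≤ (μ s).toReal :=
        ENNReal.toReal_mono hμs.ne (measure_mono Set.inter_subset_right)
      have h3 : |(μ (A ∩ s)).toReal| = (μ (A ∩ s)).toReal :=
        abs_of_nonneg ENNReal.toReal_nonneg
      rw [h3]
      calc |c| * ((μ (A ∩ s)).toReal * |φ (normInd μ (hA.inter hs) hint)|)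
          ≤ |c| * ((μ s).toReal * c₀) := by
            apply mul_le_mul_of_nonneg_left _ (abs_nonneg c)
            exact mul_le_mul h2 h1 (abs_nonneg _) ENNReal.toReal_nonneg
        _ = c₀ * (|c| * (μ s).toReal) := by ring
  · intro f g hf hg hsupp Pf Pg
    rw [map_add, map_add]
    calc |φ (maskCLM hA (hf.toLp f)) + φ (maskCLM hA (hg.toLp g))|
        ≤ |φ (maskCLM hA (hf.toLp f))| + |φ (maskCLM hA (hg.toLp g))| := abs_add_le _ _
      _ ≤ c₀ * ‖hf.toLp f‖ + c₀ * ‖hg.toLp g‖ := add_le_add Pf Pg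
      _ = c₀ * (‖hf.toLp f‖ + ‖hg.toLp g‖) := by ring
      _ = c₀ * ‖hf.toLp f + hg.toLp g‖ := by rw [norm_add_eq_of_disjoint hf hg hsupp]
  · have hcont : Continuous fun u : Lp ℝ 1 μ => |φ (maskCLM hA u)| :=
      continuous_abs.comp (φ.comp (maskCLM hA)).continuous
    exact isClosed_le hcont (continuous_const.mul continuous_norm)

end DaugavetAux

/-- If `T` shifts sufficiently many normalized indicators off their supports,
then every restriction `T_A` satisfies the Daugavet equation. -/
theorem stmt3 (μ : Measure Ω) (hsemi : ∀ A : Set Ω, MeasurableSet A → μ A = ∞ →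
      ∃ B ⊆ A, MeasurableSet B ∧ 0 < μ B ∧ μ B < ∞)
    (T : Lp ℝ 1 μ →L[ℝ] Lp ℝ 1 μ)
    (hcond : ∀ ε > (0 : ℝ), ∀ A : Set Ω, MeasurableSet A → 0 < μ A →
      ∃ B ⊆ A, ∃ (hBm : MeasurableSet B) (hBfin : μ B ≠ ∞), 0 < μ B ∧
        ∫ x in B, |(T (normInd μ hBm hBfin) : Ω → ℝ) x| ∂μ < ε) :
    ∀ A : Set Ω, MeasurableSet A → 0 < μ A →
      ‖(LoneSub μ A).subtypeL + T.comp (LoneSub μ A).subtypeL‖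
        = 1 + ‖T.comp (LoneSub μ A).subtypeL‖ := by
  classical
  intro A hA hμA
  set ι := (LoneSub μ A).subtypeL with hι
  set S := T.comp (LoneSub μ A).subtypeL with hSdef
  have hι1 : ‖ι‖ ≤ 1 := by
    rw [hι]
    exact Submodule.norm_subtypeL_le (LoneSub μ A)
  have hub : ‖ι + S‖ ≤ 1 + ‖S‖ := by
    calc ‖ι + S‖ ≤ ‖ι‖ + ‖S‖ := norm_add_le ι S
      _ ≤ 1 + ‖S‖ := by linarith
  refine le_antisymm hub ?_
  refine le_of_forall_pos_le_add fun δ hδ => ?_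
  set ε := δ / 3 with hε
  have hε0 : 0 < ε := by positivity
  -- a nearly norming element for `S`
  obtain ⟨x, hx1, hx2⟩ := S.exists_lt_apply_of_lt_opNorm (show ‖S‖ - ε < ‖S‖ by linarith)
  set v := T (x : Lp ℝ 1 μ) with hv
  have hSx : S x = v := rfl
  -- the sign function of `v`
  have hvmeas := Lp.aestronglyMeasurable v
  set q := hvmeas.mk with hq
  set w : Ω → ℝ := fun y => if 0 ≤ q y then 1 else -1 with hwdef
  have hwmeas : Measurable w :=
    Measurable.ite (measurableSet_le measurable_const
      hvmeas.stronglyMeasurable_mk.measurable) measurable_const measurable_const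
  have hwbd : ∀ y, |w y| ≤ 1 := by
    intro y
    have : w y = if 0 ≤ q y then 1 else -1 := rfl
    rw [this]
    split_ifs <;> simp
  set φ := DaugavetAux.pairingCLM T hwmeas hwbd with hφ
  have hφv : φ (x : Lp ℝ 1 μ) = ‖v‖ := by
    rw [hφ, DaugavetAux.pairingCLM_apply, L1.norm_eq_integral_norm]
    apply integral_congr_ae
    filter_upwards [hvmeas.ae_eq_mk] with y hy
    have hwy : w y = if 0 ≤ q y then 1 else -1 := rfl
    rw [Real.norm_eq_abs, ← hv, hy, hwy]
    split_ifs with h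
    · rw [one_mul, abs_of_nonneg h]
    · rw [neg_one_mul, abs_of_neg (lt_of_not_ge h)]
  have hφnorm : ‖S‖ - ε < φ (x : Lp ℝ 1 μ) := by
    rw [hφv]
    exact hx2
  -- Step A: a normalized indicator of a subset of `A` nearly norms `φ`
  obtain ⟨Bex, hBexA, hBexm, hBexfin, hBex0, -⟩ := hcond 1 one_pos A hA hμA
  have hexists : ∃ B, B ⊆ A ∧ ∃ (hm : MeasurableSet B) (hf : μ B ≠ ∞), μ B ≠ 0 ∧
      ‖S‖ - ε < |φ (normInd μ hm hf)| := by
    by_cases hsgn : ‖S‖ - ε < 0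
    · exact ⟨Bex, hBexA, hBexm, hBexfin, hBex0.ne',
        lt_of_lt_of_le hsgn (abs_nonneg _)⟩
    · push_neg at hsgn
      by_contra hcon
      push_neg at hcon
      have hbb := DaugavetAux.bound_of_ind_bound φ hA hsgn
        (fun B hBA hm hf h0 => hcon B hBA hm hf h0) (x : Lp ℝ 1 μ)
      rw [DaugavetAux.maskCLM_eq_self hA _ x.2] at hbb
      have hx1' : ‖(x : Lp ℝ 1 μ)‖ ≤ 1 := le_of_lt hx1
      have h2 : |φ (x : Lp ℝ 1 μ)| ≤ (‖S‖ - ε) * 1 :=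
        hbb.trans (mul_le_mul_of_nonneg_left hx1' hsgn)
      have h3 := le_abs_self (φ (x : Lp ℝ 1 μ))
      linarith
  obtain ⟨B₀, hB₀A, hB₀m, hB₀fin, hB₀0, hB₀big⟩ := hexists
  set σ : ℝ := if 0 ≤ φ (normInd μ hB₀m hB₀fin) then 1 else -1 with hσ
  have hσ1 : σ = 1 ∨ σ = -1 := by
    rw [hσ]
    split_ifs <;> simp
  set φ' := σ • φ with hφ'
  have hφ'B₀ : ‖S‖ - ε < φ' (normInd μ hB₀m hB₀fin) := by
    rw [hφ', ContinuousLinearMap.smul_apply, smul_eq_mul, hσ]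
    split_ifs with h
    · rwa [one_mul, ← abs_of_nonneg h]
    · rwa [neg_one_mul, ← abs_of_neg (lt_of_not_ge h)]
  -- Step B: localize
  obtain ⟨B₁, hB₁sub, hB₁m, hB₁pos, hB₁prop⟩ :=
    DaugavetAux.exists_positive_part φ' hB₀m hB₀0 hB₀fin hφ'B₀
  -- Step C: apply the hypothesis inside `B₁`
  obtain ⟨B', hB'sub, hB'm, hB'fin, hB'pos, hB'small⟩ := hcond ε hε0 B₁ hB₁m hB₁pos
  set n := normInd μ hB'm hB'fin with hn
  set u := T n with hu
  have hB'A : B' ⊆ A := fun y hy => hB₀A (hB₁sub (hB'sub hy))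
  have hnB' : ∀ᵐ y ∂μ, y ∉ B' → (n : Ω → ℝ) y = 0 := indicatorConstLp_coeFn_notMem
  have hnA : (n : Lp ℝ 1 μ) ∈ LoneSub μ A := by
    show ∀ᵐ y ∂μ, y ∉ A → (n : Ω → ℝ) y = 0
    filter_upwards [hnB'] with y hy hyA
    exact hy (fun hyB => hyA (hB'A hyB))
  have hn1 : ‖n‖ = 1 := DaugavetAux.norm_normInd hB'm hB'fin hB'pos.ne'
  have hugeq : ‖S‖ - ε ≤ ‖u‖ := by
    have h1 : ‖S‖ - ε ≤ φ' n := hB₁prop B' hB'sub hB'm hB'fin hB'pos.ne'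
    have h2 : φ' n ≤ |φ n| := by
      rw [hφ', ContinuousLinearMap.smul_apply, smul_eq_mul]
      rcases hσ1 with h | h <;> rw [h]
      · rw [one_mul]; exact le_abs_self _
      · rw [neg_one_mul]; exact neg_le_abs _
    have h3 : |φ n| ≤ ‖T n‖ := DaugavetAux.abs_pairingCLM_le T hwmeas hwbd n
    have h4 : ‖T n‖ = ‖u‖ := rfl
    linarith
  have hI : ∫ y in B', ‖(u : Ω → ℝ) y‖ ∂μ < ε := by
    have : ∫ y in B', ‖(u : Ω → ℝ) y‖ ∂μ = ∫ y in B', |(u : Ω → ℝ) y| ∂μ := by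
      simp [Real.norm_eq_abs]
    rw [this, hu, hn]
    exact hB'small
  have hInonneg : 0 ≤ ∫ y in B', ‖(u : Ω → ℝ) y‖ ∂μ :=
    integral_nonneg fun _ => norm_nonneg _
  have hbig : 1 + ‖S‖ - 3 * ε ≤ ‖n + u‖ := by
    have := DaugavetAux.norm_add_ge_of_supp n u hB'm hnB'
    rw [hn1] at this
    linarith
  -- conclude
  have hmem : σ • n ∈ LoneSub μ A := Submodule.smul_mem _ σ hnA
  set g : LoneSub μ A := ⟨σ • n, hmem⟩ with hg
  have hσabs : |σ| = 1 := by rcases hσ1 with h | h <;> simp [h]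
  have hgnorm : ‖g‖ = 1 := by
    have : ‖g‖ = ‖σ • n‖ := rfl
    rw [this, norm_smul, hn1, Real.norm_eq_abs, hσabs, one_mul]
  have happly : (ι + S) g = σ • (n + u) := by
    have h1 : ι g = σ • n := rfl
    have h2 : S g = σ • u := by
      have : S g = T (σ • n) := rfl
      rw [this, T.map_smul, hu]
    rw [ContinuousLinearMap.add_apply, h1, h2, smul_add]
  have hle : ‖(ι + S) g‖ ≤ ‖ι + S‖ := by
    calc ‖(ι + S) g‖ ≤ ‖ι + S‖ * ‖g‖ := (ι + S).le_opNorm g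
      _ = ‖ι + S‖ := by rw [hgnorm, mul_one]
  have hfin2 : ‖n + u‖ ≤ ‖ι + S‖ := by
    have : ‖(ι + S) g‖ = ‖n + u‖ := by
      rw [happly, norm_smul, Real.norm_eq_abs, hσabs, one_mul]
    linarith
  have : ε * 3 = δ := by rw [hε]; ring
  linarith
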